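/- Let R be a commutative ring with exactly two associated primes p₁ and p₂ satisfying p₁ ∩ p₂ = {0}. Then both the zero-divisor graph Γ(R) and its complement are divisor graphs. -/

import Mathlib

/-- A finite simple graph is a *divisor graph* if there is an injection from its
vertices to the positive integers such that distinct vertices are adjacent iff
one label divides the other. -/
def IsDivisorGraph {V : Type*} (G : SimpleGraph V) : Prop :=
  ∃ f : V → ℕ, Function.Injective f ∧ (∀ v, 0 < f v) ∧
    ∀ u v : V, u ≠ v → (G.Adj u v ↔ f u ∣ f v ∨ f v ∣ f u)

/-- The vertex set of the zero-divisor graph: nonzero zero-divisors of `R`. -/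
abbrev ZDVertex (R : Type*) [CommRing R] : Type _ :=
  {a : R // a ≠ 0 ∧ ∃ b : R, b ≠ 0 ∧ a * b = 0}

/-- The zero-divisor graph `Γ(R)`. -/
def zeroDivisorGraph (R : Type*) [CommRing R] : SimpleGraph (ZDVertex R) where
  Adj x y := x ≠ y ∧ x.val * y.val = 0
  symm := ⟨fun x y ⟨h1, h2⟩ => ⟨h1.symm, by rwa [mul_comm]⟩⟩
  loopless := ⟨fun x ⟨h, _⟩ => h rfl⟩

/-- The complement of the zero-divisor graph `Γ(R)̄`. -/
def compZDGraph (R : Type*) [CommRing R] : SimpleGraph (ZDVertex R) where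
  Adj x y := x ≠ y ∧ x.val * y.val ≠ 0
  symm := ⟨fun x y ⟨h1, h2⟩ => ⟨h1.symm, by rwa [mul_comm]⟩⟩
  loopless := ⟨fun x ⟨h, _⟩ => h rfl⟩

open Nat in
private lemma aux_pow_not_dvd {p q : ℕ} (hp : p.Prime) (hq : q.Prime) (hne : p ≠ q)
    (a b : ℕ) : ¬ p ^ (a + 1) ∣ q ^ (b + 1) := fun h => by
  have h1 : p ∣ q ^ (b + 1) := dvd_trans (dvd_pow_self p (Nat.succ_ne_zero a)) h
  exact hne ((Nat.prime_dvd_prime_iff_eq hp hq).mp (hp.dvd_of_dvd_pow h1))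

private lemma aux_nth_prime_inj : Function.Injective (Nat.nth Nat.Prime) :=
  Nat.nth_injective Nat.infinite_setOf_prime

theorem divisorGraph_of_two_ass (R : Type*) [CommRing R] [Fintype R] (p₁ p₂ : Ideal R)
    (hAss : associatedPrimes R R = {p₁, p₂}) (hne : p₁ ≠ p₂) (hint : p₁ ⊓ p₂ = ⊥) :
    IsDivisorGraph (zeroDivisorGraph R) ∧ IsDivisorGraph (compZDGraph R) := by
  classical
  have hp1 : p₁.IsPrime := by
    have h : p₁ ∈ associatedPrimes R R := by rw [hAss]; left; rfl
    exact h.isPrime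
  have hp2 : p₂.IsPrime := by
    have h : p₂ ∈ associatedPrimes R R := by rw [hAss]; right; rfl
    exact h.isPrime
  -- every vertex lies in p₁ or p₂
  have hmem : ∀ v : ZDVertex R, v.val ∈ p₁ ∨ v.val ∈ p₂ := by
    intro v
    obtain ⟨hv0, b, hb0, hab⟩ := v.2
    have h : v.val ∈ {r : R | ∃ x : R, x ≠ 0 ∧ r • x = 0} :=
      ⟨b, hb0, by simpa [smul_eq_mul] using hab⟩
    rw [← biUnion_associatedPrimes_eq_zero_divisors R R, hAss] at h
    simpa using h
  have hnotboth : ∀ a : R, a ≠ 0 → a ∈ p₁ → a ∈ p₂ → False := by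
    intro a ha0 h1 h2
    have : a ∈ p₁ ⊓ p₂ := ⟨h1, h2⟩
    rw [hint] at this
    exact ha0 (by simpa using this)
  have hcross : ∀ a b : R, a ∈ p₁ → b ∈ p₂ → a * b = 0 := by
    intro a b ha hb
    have : a * b ∈ p₁ ⊓ p₂ := ⟨p₁.mul_mem_right _ ha, p₂.mul_mem_left _ hb⟩
    rw [hint] at this
    simpa using this
  have hsame1 : ∀ a b : R, a ≠ 0 → b ≠ 0 → a ∈ p₁ → b ∈ p₁ → a * b ≠ 0 := by
    intro a b ha0 hb0 ha hb h
    have hm : a * b ∈ p₂ := h ▸ p₂.zero_mem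
    rcases hp2.mem_or_mem hm with h' | h'
    · exact hnotboth a ha0 ha h'
    · exact hnotboth b hb0 hb h'
  have hsame2 : ∀ a b : R, a ≠ 0 → b ≠ 0 → a ∈ p₂ → b ∈ p₂ → a * b ≠ 0 := by
    intro a b ha0 hb0 ha hb h
    have hm : a * b ∈ p₁ := h ▸ p₁.zero_mem
    rcases hp1.mem_or_mem hm with h' | h'
    · exact hnotboth a ha0 h' ha
    · exact hnotboth b hb0 h' hb
  have := Fintype.ofFinite (ZDVertex R)
  set c := Fintype.card (ZDVertex R) with hc
  let e : ZDVertex R → ℕ := fun v => ((Fintype.equivFin (ZDVertex R)) v : ℕ)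
  have he_inj : Function.Injective e := fun u v h =>
    (Fintype.equivFin (ZDVertex R)).injective (Fin.ext h)
  have he_lt : ∀ v, e v < c := fun v => ((Fintype.equivFin (ZDVertex R)) v).2
  let q : ℕ → ℕ := fun n => Nat.nth Nat.Prime n
  have hq : ∀ n, (q n).Prime := Nat.prime_nth_prime
  have hq_inj : Function.Injective q := aux_nth_prime_inj
  set N : ℕ := ∏ i ∈ Finset.range c, q i with hN
  have hNpos : 0 < N := Finset.prod_pos (fun i _ => (hq i).pos)
  have hdvdN : ∀ k, k < c → q k ∣ N := fun k hk =>
    Finset.dvd_prod_of_mem _ (Finset.mem_range.mpr hk)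
  have hvalne : ∀ u v : ZDVertex R, u ≠ v → u.val ≠ v.val := by
    intro u v h hval; exact h (Subtype.ext hval)
  constructor
  · -- Γ(R) : complete bipartite
    refine ⟨fun v => if v.val ∈ p₁ then q (e v) else N * q (e v + c), ?_, ?_, ?_⟩
    · intro u v h
      by_cases hu : u.val ∈ p₁ <;> by_cases hv : v.val ∈ p₁ <;>
        simp only [hu, hv, if_pos, if_neg, if_true, if_false] at h
      · exact he_inj (hq_inj h)
      · exfalso
        have h1 : q (e v + c) ∣ q (e u) := ⟨N, by rw [h, mul_comm]⟩
        have := hq_inj ((Nat.prime_dvd_prime_iff_eq (hq _) (hq _)).mp h1)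
        have := he_lt u
        omega
      · exfalso
        have h1 : q (e u + c) ∣ q (e v) := ⟨N, by rw [← h, mul_comm]⟩
        have := hq_inj ((Nat.prime_dvd_prime_iff_eq (hq _) (hq _)).mp h1)
        have := he_lt v
        omega
      · have h2 := hq_inj (Nat.eq_of_mul_eq_mul_left hNpos h)
        exact he_inj (by omega)
    · intro v
      by_cases hv : v.val ∈ p₁ <;> simp only [hv, if_pos, if_neg, if_true, if_false]
      · exact (hq _).pos
      · exact Nat.mul_pos hNpos (hq _).pos
    · intro u v huv
      by_cases hu : u.val ∈ p₁ <;> by_cases hv : v.val ∈ p₁ <;>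
        simp only [hu, hv, if_pos, if_neg, if_true, if_false]
      · constructor
        · rintro ⟨-, h0⟩
          exact absurd h0 (hsame1 _ _ u.2.1 v.2.1 hu hv)
        · rintro (h | h) <;>
          · exact absurd (hq_inj ((Nat.prime_dvd_prime_iff_eq (hq _) (hq _)).mp h))
              (fun h' => huv (he_inj (by omega)))
      · have hv2 : v.val ∈ p₂ := (hmem v).resolve_left hv
        constructor
        · intro _; left; exact dvd_mul_of_dvd_left (hdvdN _ (he_lt u)) _
        · intro _; exact ⟨huv, hcross _ _ hu hv2⟩
      · have hu2 : u.val ∈ p₂ := (hmem u).resolve_left hu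
        constructor
        · intro _; right; exact dvd_mul_of_dvd_left (hdvdN _ (he_lt v)) _
        · intro _; exact ⟨huv, by rw [mul_comm]; exact hcross _ _ hv hu2⟩
      · have hu2 : u.val ∈ p₂ := (hmem u).resolve_left hu
        have hv2 : v.val ∈ p₂ := (hmem v).resolve_left hv
        constructor
        · rintro ⟨-, h0⟩
          exact absurd h0 (hsame2 _ _ u.2.1 v.2.1 hu2 hv2)
        · rintro (h | h) <;>
          · rw [Nat.mul_dvd_mul_iff_left hNpos] at h
            exact absurd (hq_inj ((Nat.prime_dvd_prime_iff_eq (hq _) (hq _)).mp h))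
              (fun h' => huv (he_inj (by omega)))
  · -- complement : two cliques
    refine ⟨fun v => if v.val ∈ p₁ then 2 ^ (e v + 1) else 3 ^ (e v + 1), ?_, ?_, ?_⟩
    · intro u v h
      by_cases hu : u.val ∈ p₁ <;> by_cases hv : v.val ∈ p₁ <;>
        simp only [hu, hv, if_pos, if_neg, if_true, if_false] at h
      · have := Nat.pow_right_injective (le_refl 2) h
        exact he_inj (by omega)
      · exact absurd (h ▸ dvd_refl _) (aux_pow_not_dvd Nat.prime_two Nat.prime_three
          (by norm_num) (e u) (e v))
      · exact absurd (h ▸ dvd_refl _) (aux_pow_not_dvd Nat.prime_three Nat.prime_two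
          (by norm_num) (e u) (e v))
      · have := Nat.pow_right_injective (by norm_num : 2 ≤ 3) h
        exact he_inj (by omega)
    · intro v
      by_cases hv : v.val ∈ p₁ <;> simp only [hv, if_pos, if_neg, if_true, if_false] <;>
        positivity
    · intro u v huv
      by_cases hu : u.val ∈ p₁ <;> by_cases hv : v.val ∈ p₁ <;>
        simp only [hu, hv, if_pos, if_neg, if_true, if_false]
      · constructor
        · intro _
          rcases le_total (e u) (e v) with h | h
          · left; exact Nat.pow_dvd_pow 2 (by omega)
          · right; exact Nat.pow_dvd_pow 2 (by omega)
        · intro _; exact ⟨huv, hsame1 _ _ u.2.1 v.2.1 hu hv⟩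
      · have hv2 : v.val ∈ p₂ := (hmem v).resolve_left hv
        constructor
        · rintro ⟨-, h0⟩; exact absurd (hcross _ _ hu hv2) h0
        · rintro (h | h)
          · exact absurd h (aux_pow_not_dvd Nat.prime_two Nat.prime_three
              (by norm_num) _ _)
          · exact absurd h (aux_pow_not_dvd Nat.prime_three Nat.prime_two
              (by norm_num) _ _)
      · have hu2 : u.val ∈ p₂ := (hmem u).resolve_left hu
        constructor
        · rintro ⟨-, h0⟩
          exact absurd (by rw [mul_comm]; exact hcross _ _ hv hu2) h0
        · rintro (h | h)
          · exact absurd h (aux_pow_not_dvd Nat.prime_three Nat.prime_two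
              (by norm_num) _ _)
          · exact absurd h (aux_pow_not_dvd Nat.prime_two Nat.prime_three
              (by norm_num) _ _)
      · have hu2 : u.val ∈ p₂ := (hmem u).resolve_left hu
        have hv2 : v.val ∈ p₂ := (hmem v).resolve_left hv
        constructor
        · intro _
          rcases le_total (e u) (e v) with h | h
          · left; exact Nat.pow_dvd_pow 3 (by omega)
          · right; exact Nat.pow_dvd_pow 3 (by omega)
        · intro _; exact ⟨huv, hsame2 _ _ u.2.1 v.2.1 hu2 hv2⟩
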